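/- If two sets of degrees of freedom take equal-sized steps using update rules Δy^A = ∑_i k^A_i D^A(q_i) and Δy^B = ∑_i k^B_i D^B(q_i) with the same evaluation states q_i, and if for every linear conserved quantity c (i.e., c · D(y) = 0 for all y) we require Δ(c·y) = 0 for all possible derivative operators D restricted only by the conservation condition, then k^A_i = k^B_i for all i (the two sets must use the same step rule). -/
import Mathlib


/-- If two sets of degrees of freedom take equal-sized steps with the same
    evaluation states, and every linear conserved quantity is preserved for
    every derivative operator satisfying the conservation condition, then the
    two sets must use the same step rule: k^A_i = k^B_i. -/
theorem conservative_equal_steps_same_rule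
    (dA dB : ℕ) (hdA : 1 ≤ dA) (hdB : 1 ≤ dB)
    (ι : Type) [Fintype ι]
    (kA kB : ι → ℝ)
    (q : ι → (Fin dA → ℝ) × (Fin dB → ℝ)) (hq : Function.Injective q)
    (hcons : ∀ (DA : (Fin dA → ℝ) × (Fin dB → ℝ) → Fin dA → ℝ)
        (DB : (Fin dA → ℝ) × (Fin dB → ℝ) → Fin dB → ℝ)
        (cA : Fin dA → ℝ) (cB : Fin dB → ℝ),
        (∀ y : (Fin dA → ℝ) × (Fin dB → ℝ),
          (∑ a, cA a * DA y a) + (∑ b, cB b * DB y b) = 0) →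
        (∑ a, cA a * ∑ i, kA i * DA (q i) a) +
          (∑ b, cB b * ∑ i, kB i * DB (q i) b) = 0) :
    ∀ i, kA i = kB i := by
  intro i₀
  set f : (Fin dA → ℝ) × (Fin dB → ℝ) → ℝ := fun y => if y = q i₀ then 1 else 0 with hf
  have a0 : Fin dA := ⟨0, hdA⟩
  have b0 : Fin dB := ⟨0, hdB⟩
  have key := hcons (fun y _ => f y) (fun y _ => -(f y))
      (fun a => if a = a0 then 1 else 0) (fun b => if b = b0 then 1 else 0)
      (by
        intro y
        simp [Finset.sum_ite_eq', mul_comm])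
  simp only [Finset.sum_ite_eq', Finset.mem_univ, if_true, one_mul, ite_mul, zero_mul] at key
  have hA : (∑ i, kA i * f (q i)) = kA i₀ := by
    rw [hf]
    rw [Finset.sum_eq_single i₀]
    · simp
    · intro j _ hj
      have : q j ≠ q i₀ := fun h => hj (hq h)
      simp [this]
    · simp
  have hB : (∑ i, kB i * -(f (q i))) = -(kB i₀) := by
    rw [hf]
    rw [Finset.sum_eq_single i₀]
    · simp
    · intro j _ hj
      have : q j ≠ q i₀ := fun h => hj (hq h)
      simp [this]
    · simp
  rw [hA, hB] at key
  linarith
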